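/- Define the Hadamard (Fourier) transform over F₂ⁿ as the complex matrix H indexed by V × V with entries H(x,y) = 2^{−n/2} · (−1)^{⟨x,y⟩}. Then for every submodule A of V and all s, s' ∈ V, applying H to the coset state gives H · |A_{s,s'}⟩ = (−1)^{⟨s,s'⟩} · |(A^⊥)_{s',s}⟩; that is, the n-qubit Hadamard transform maps the coset state of (A, s, s') to the coset state of (A^⊥, s', s), up to the global phase (−1)^{⟨s,s'⟩}. -/

import Mathlib

open scoped BigOperators Kronecker Classical ComplexOrder

noncomputable section

/-- The vector space `F₂ⁿ`. -/
abbrev V (n : ℕ) : Type := Fin n → ZMod 2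

/-- The standard bilinear pairing `⟨x,y⟩ = ∑ i, xᵢ * yᵢ` on `F₂ⁿ`. -/
def pairing {n : ℕ} (x y : V n) : ZMod 2 := ∑ i, x i * y i

/-- `(−1)^b ∈ ℂ` for `b : ZMod 2`. -/
def sign (b : ZMod 2) : ℂ := if b = 0 then 1 else -1

lemma pairing_add_right {n : ℕ} (x y z : V n) :
    pairing x (y + z) = pairing x y + pairing x z := by
  simp [pairing, mul_add, Finset.sum_add_distrib]

lemma pairing_smul_right {n : ℕ} (c : ZMod 2) (x y : V n) :
    pairing x (c • y) = c * pairing x y := by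
  simp only [pairing, Pi.smul_apply, smul_eq_mul, Finset.mul_sum]
  exact Finset.sum_congr rfl fun i _ => by ring

/-- The orthogonal complement `A^⊥ = {y | ∀ a ∈ A, ⟨a,y⟩ = 0}`. -/
def perp {n : ℕ} (A : Submodule (ZMod 2) (V n)) : Submodule (ZMod 2) (V n) where
  carrier := {y | ∀ a ∈ A, pairing a y = 0}
  zero_mem' := by
    simp only [Set.mem_setOf_eq]
    intro a _
    simp [pairing]
  add_mem' := by
    intro y z hy hz
    simp only [Set.mem_setOf_eq] at *
    intro a ha
    rw [pairing_add_right, hy a ha, hz a ha, add_zero]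
  smul_mem' := by
    intro c y hy
    simp only [Set.mem_setOf_eq] at *
    intro a ha
    rw [pairing_smul_right, hy a ha, mul_zero]

/-- The coset `A + s = {a + s : a ∈ A}`. -/
def coset {n : ℕ} (A : Submodule (ZMod 2) (V n)) (s : V n) : Set (V n) :=
  {v | ∃ a ∈ A, v = a + s}

noncomputable instance {n : ℕ} (A : Submodule (ZMod 2) (V n)) : Fintype A :=
  Fintype.ofFinite _

/-- The coset state `|A_{s,s'}⟩ = |A|^{−1/2} ∑_{a ∈ A} (−1)^{⟨a,s'⟩} e_{a+s}`. -/
noncomputable def cosetState {n : ℕ} (A : Submodule (ZMod 2) (V n)) (s s' : V n) :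
    EuclideanSpace ℂ (V n) :=
  ((Real.sqrt (Nat.card A) : ℂ))⁻¹ •
    ∑ a : A, sign (pairing (a : V n) s') • EuclideanSpace.single ((a : V n) + s) (1 : ℂ)

/-- A family of orthogonal projections: each member is Hermitian and idempotent. -/
def IsProjFamily {ι m : Type*} [Fintype m] (P : ι → Matrix m m ℂ) : Prop :=
  ∀ p, (P p).IsHermitian ∧ P p * P p = P p

/-- Coset invariance of a family indexed by pairs `(s, s')`:
the value depends only on the pair of cosets `(A + s, A^⊥ + s')`. -/
def CosetInvariant {n : ℕ} {α : Type*} (A : Submodule (ZMod 2) (V n))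
    (F : V n × V n → α) : Prop :=
  ∀ s₁ s₁' s₂ s₂' : V n, coset A s₁ = coset A s₂ →
    coset (perp A) s₁' = coset (perp A) s₂' → F (s₁, s₁') = F (s₂, s₂')

/-- The rank-one matrix `|A_{s,s'}⟩⟨A_{s,s'}|`. -/
noncomputable def outer {n : ℕ} (A : Submodule (ZMod 2) (V n)) (s s' : V n) :
    Matrix (V n) (V n) ℂ :=
  Matrix.of fun x y => cosetState A s s' x * (starRingEnd ℂ) (cosetState A s s' y)

/-- `Π^A[P,Q] = 2^{−n} ∑_{s,s'} |A_{s,s'}⟩⟨A_{s,s'}| ⊗ P(s,s') ⊗ Q(s,s')`. -/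
noncomputable def PiMat {n : ℕ} {I J : Type*} [Fintype I] [Fintype J]
    (A : Submodule (ZMod 2) (V n)) (P : V n × V n → Matrix I I ℂ)
    (Q : V n × V n → Matrix J J ℂ) : Matrix (V n × I × J) (V n × I × J) ℂ :=
  ((2 : ℂ) ^ n)⁻¹ • ∑ s : V n, ∑ s' : V n, (outer A s s') ⊗ₖ (P (s, s') ⊗ₖ Q (s, s'))

/-- The `ℓ² → ℓ²` operator norm of a complex square matrix. -/
noncomputable def opNorm {m : Type*} [Fintype m] [DecidableEq m] (M : Matrix m m ℂ) : ℝ :=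
  ‖Matrix.toEuclideanCLM (𝕜 := ℂ) M‖

/-- The Hadamard (Fourier) transform over `F₂ⁿ`: `H(x,y) = 2^{−n/2} (−1)^{⟨x,y⟩}`. -/
noncomputable def Hmat (n : ℕ) : Matrix (V n) (V n) ℂ :=
  Matrix.of fun x y => ((Real.sqrt ((2 : ℝ) ^ n) : ℂ))⁻¹ * sign (pairing x y)

lemma pairing_comm {n : ℕ} (x y : V n) : pairing x y = pairing y x :=
  Finset.sum_congr rfl fun i _ => mul_comm _ _

lemma pairing_add_left {n : ℕ} (x y z : V n) :
    pairing (x + y) z = pairing x z + pairing y z := by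
  simp [pairing, add_mul, Finset.sum_add_distrib]

lemma sign_add (a b : ZMod 2) : sign (a + b) = sign a * sign b := by
  rcases (show ∀ x : ZMod 2, x = 0 ∨ x = 1 by decide) a with rfl | rfl <;>
    rcases (show ∀ x : ZMod 2, x = 0 ∨ x = 1 by decide) b with rfl | rfl <;> simp [sign] <;> decide

lemma sign_zero' : sign 0 = 1 := rfl
lemma sign_one' : sign 1 = -1 := by simp [sign]

def Bform (n : ℕ) : LinearMap.BilinForm (ZMod 2) (V n) :=
  LinearMap.mk₂ (ZMod 2) pairing
    (fun x y z => pairing_add_left x y z)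
    (fun c x y => by simp [pairing, Finset.mul_sum, mul_assoc])
    (fun x y z => by simp [pairing, mul_add, Finset.sum_add_distrib])
    (fun c x y => by
      simp only [pairing, Pi.smul_apply, smul_eq_mul, Finset.mul_sum]
      exact Finset.sum_congr rfl fun i _ => by ring)

lemma Bform_nondeg (n : ℕ) : (Bform n).Nondegenerate := by
  have key : ∀ x : V n, (∀ y : V n, pairing x y = 0) → x = 0 := by
    intro x hx
    funext i
    have := hx (Pi.single i 1)
    simpa [pairing, Pi.single_apply, mul_ite, Finset.sum_ite_eq'] using this
  exact ⟨fun x hx => key x fun y => hx y,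
    fun y hy => key y fun x => by rw [pairing_comm]; exact hy x⟩

lemma Bform_refl (n : ℕ) : (Bform n).IsRefl := by
  intro x y h
  have : pairing x y = 0 := h
  show pairing y x = 0
  rwa [pairing_comm]

lemma perp_eq {n : ℕ} (A : Submodule (ZMod 2) (V n)) :
    perp A = (Bform n).orthogonal A := by
  ext y
  exact Iff.rfl

lemma card_mul_card_perp {n : ℕ} (A : Submodule (ZMod 2) (V n)) :
    Nat.card A * Nat.card (perp A) = 2 ^ n := by
  have hV : Module.finrank (ZMod 2) (V n) = n := by
    simp [Module.finrank_pi]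
  have hle : Module.finrank (ZMod 2) A ≤ n := by
    have := Submodule.finrank_le A; omega
  have hperp : Module.finrank (ZMod 2) (perp A) = n - Module.finrank (ZMod 2) A := by
    rw [perp_eq, LinearMap.BilinForm.finrank_orthogonal (Bform_nondeg n) A, hV]
  have c1 : Nat.card A = 2 ^ Module.finrank (ZMod 2) A := by
    rw [Nat.card_eq_fintype_card, Module.card_eq_pow_finrank (K := ZMod 2), ZMod.card]
  have c2 : Nat.card (perp A) = 2 ^ Module.finrank (ZMod 2) (perp A) := by
    rw [Nat.card_eq_fintype_card, Module.card_eq_pow_finrank (K := ZMod 2), ZMod.card]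
  rw [c1, c2, hperp, ← pow_add, Nat.add_sub_cancel' hle]

lemma sum_sign_pairing {n : ℕ} (A : Submodule (ZMod 2) (V n)) (z : V n) :
    ∑ a : A, sign (pairing (a : V n) z)
      = if z ∈ perp A then (Nat.card A : ℂ) else 0 := by
  split_ifs with h
  · have hz : ∀ a ∈ A, pairing a z = 0 := h
    have : ∀ a : A, sign (pairing (a : V n) z) = 1 := fun a => by
      rw [hz a a.2]; rfl
    simp [this, Nat.card_eq_fintype_card]
  · have h' : ¬ ∀ a ∈ A, pairing a z = 0 := h
    push_neg at h'
    obtain ⟨a₀, ha₀A, ha₀⟩ := h'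
    have h1 : pairing a₀ z = 1 := by
      generalize pairing a₀ z = p at *
      rcases (show ∀ x : ZMod 2, x = 0 ∨ x = 1 by decide) p with rfl | rfl <;> simp_all
    set S := ∑ a : A, sign (pairing (a : V n) z) with hS
    have key : S = -S := by
      have e : ∑ a : A, sign (pairing (((⟨a₀, ha₀A⟩ : A) + a : A) : V n) z)
          = ∑ a : A, sign (pairing (a : V n) z) :=
        Fintype.sum_equiv (Equiv.addLeft (⟨a₀, ha₀A⟩ : A)) _ _ (fun a => rfl)
      have step : ∀ a : A,
          sign (pairing (((⟨a₀, ha₀A⟩ : A) + a : A) : V n) z)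
            = - sign (pairing (a : V n) z) := fun a => by
        rw [show (((⟨a₀, ha₀A⟩ : A) + a : A) : V n) = a₀ + (a : V n) from rfl,
          pairing_add_left, sign_add, h1, sign_one']
        ring
      calc S = ∑ a : A, sign (pairing (((⟨a₀, ha₀A⟩ : A) + a : A) : V n) z) := by
              rw [e]
        _ = ∑ a : A, - sign (pairing (a : V n) z) := by
              exact Finset.sum_congr rfl fun a _ => step a
        _ = -S := by rw [hS, Finset.sum_neg_distrib]
    have h2 : S + S = 0 := by linear_combination key
    exact add_self_eq_zero.mp h2

lemma sqrt_calc {a b c : ℝ} (ha : 0 < a) (hb : 0 < b) (hc : c = a * b) :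
    (Real.sqrt a)⁻¹ * (Real.sqrt c)⁻¹ * a = (Real.sqrt b)⁻¹ := by
  subst hc
  rw [Real.sqrt_mul ha.le, mul_inv]
  rw [show (Real.sqrt a)⁻¹ * ((Real.sqrt a)⁻¹ * (Real.sqrt b)⁻¹) * a
      = (Real.sqrt a * Real.sqrt a)⁻¹ * a * (Real.sqrt b)⁻¹ by ring]
  rw [Real.mul_self_sqrt ha.le, inv_mul_cancel₀ (ne_of_gt ha), one_mul]

lemma cosetState_apply {n : ℕ} (A : Submodule (ZMod 2) (V n)) (s s' x : V n) :
    cosetState A s s' x = ((Real.sqrt (Nat.card A) : ℂ))⁻¹ *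
      ∑ t : A, sign (pairing (t : V n) s') * (if x = (t : V n) + s then 1 else 0) := by
  simp only [cosetState, PiLp.smul_apply, smul_eq_mul]
  rw [WithLp.ofLp_sum, Finset.sum_apply]
  simp [EuclideanSpace.single_apply, mul_ite]

/-- The Hadamard transform maps the coset state of `(A, s, s')` to the coset state of
`(A^⊥, s', s)`, up to the global phase `(−1)^{⟨s,s'⟩}`. -/
theorem hadamard_mulVec_cosetState
    {n : ℕ} (hn : 0 < n) (A : Submodule (ZMod 2) (V n)) (s s' : V n) :
    (Hmat n).mulVec (cosetState A s s')
      = (sign (pairing s s') • cosetState (perp A) s' s : EuclideanSpace ℂ (V n)) := by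
  classical
  have haN : 0 < Nat.card A := Nat.card_pos
  have hbN : 0 < Nat.card (perp A) := Nat.card_pos
  set a : ℝ := (Nat.card A : ℝ) with ha_def
  set b : ℝ := (Nat.card (perp A) : ℝ) with hb_def
  have ha : (0:ℝ) < a := by rw [ha_def]; exact_mod_cast haN
  have hb : (0:ℝ) < b := by rw [hb_def]; exact_mod_cast hbN
  have hab : (2:ℝ) ^ n = a * b := by
    rw [ha_def, hb_def, ← Nat.cast_mul, card_mul_card_perp A]
    push_cast; ring
  have hadd_self : ∀ v : V n, v + v = 0 := fun v => by
    funext i; exact CharTwo.add_self_eq_zero _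
  have hpair_self : ∀ p : ZMod 2, p + p = 0 := fun p => CharTwo.add_self_eq_zero _
  funext y
  -- Left-hand side
  have hL : (Hmat n).mulVec (cosetState A s s') y
      = (((Real.sqrt a : ℝ)) : ℂ)⁻¹ * (((Real.sqrt ((2:ℝ)^n) : ℝ)) : ℂ)⁻¹
          * sign (pairing y s)
          * (if s' + y ∈ perp A then ((Nat.card A : ℕ) : ℂ) else 0) := by
    rw [← sum_sign_pairing A (s' + y)]
    show ∑ x, Hmat n y x * cosetState A s s' x = _
    simp_rw [cosetState_apply]
    calc ∑ x, Hmat n y x * ((((Real.sqrt a : ℝ)) : ℂ)⁻¹ *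
            ∑ t : A, sign (pairing (t : V n) s') * (if x = (t : V n) + s then 1 else 0))
        = ∑ x, (((Real.sqrt a : ℝ)) : ℂ)⁻¹ *
            ∑ t : A, (sign (pairing (t : V n) s') * (if x = (t : V n) + s then 1 else 0))
              * Hmat n y x := by
          refine Finset.sum_congr rfl fun x _ => ?_
          rw [← Finset.sum_mul]; ring
      _ = (((Real.sqrt a : ℝ)) : ℂ)⁻¹ * ∑ t : A, ∑ x,
            (sign (pairing (t : V n) s') * (if x = (t : V n) + s then 1 else 0))
              * Hmat n y x := by
          rw [← Finset.mul_sum, Finset.sum_comm]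
      _ = (((Real.sqrt a : ℝ)) : ℂ)⁻¹ * ∑ t : A,
            sign (pairing (t : V n) s') * Hmat n y ((t : V n) + s) := by
          congr 1
          refine Finset.sum_congr rfl fun t _ => ?_
          simp [ite_mul, mul_ite]
      _ = (((Real.sqrt a : ℝ)) : ℂ)⁻¹ * ∑ t : A,
            (((Real.sqrt ((2:ℝ)^n) : ℝ)) : ℂ)⁻¹ * sign (pairing y s)
              * sign (pairing (t : V n) (s' + y)) := by
          congr 1
          refine Finset.sum_congr rfl fun t _ => ?_
          have h1 : pairing y ((t : V n) + s) = pairing (t : V n) y + pairing y s := by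
            rw [pairing_add_right, pairing_comm y (t : V n)]
          have h2 : pairing (t : V n) (s' + y)
              = pairing (t : V n) s' + pairing (t : V n) y := pairing_add_right _ _ _
          rw [Hmat]
          show sign (pairing (t:V n) s') *
              ((((Real.sqrt ((2:ℝ)^n) : ℝ)) : ℂ)⁻¹ * sign (pairing y ((t:V n) + s))) = _
          rw [h1, h2, sign_add, sign_add]
          ring
      _ = _ := by rw [← Finset.mul_sum]; ring
  rw [hL]
  -- Right-hand side
  have hR : (sign (pairing s s') • cosetState (perp A) s' s : EuclideanSpace ℂ (V n)) y
      = sign (pairing s s') * ((((Real.sqrt b : ℝ)) : ℂ)⁻¹ *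
          ∑ t : perp A, sign (pairing (t : V n) s) * (if y = (t : V n) + s' then 1 else 0)) := by
    show sign (pairing s s') * cosetState (perp A) s' s y = _
    rw [cosetState_apply]
  rw [hR]
  by_cases h : s' + y ∈ perp A
  · rw [if_pos h]
    have hite : ∀ t : perp A, (y = (t : V n) + s') ↔ (t = (⟨s' + y, h⟩ : perp A)) := by
      intro t
      constructor
      · intro hy
        apply Subtype.ext
        show (t : V n) = s' + y
        rw [hy]
        rw [show s' + ((t:V n) + s') = (t:V n) + (s' + s') by ring]
        rw [hadd_self, add_zero]
      · intro ht
        rw [ht]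
        show y = (s' + y) + s'
        rw [show (s' + y) + s' = y + (s' + s') by ring, hadd_self, add_zero]
    have hsum : ∑ t : perp A, sign (pairing (t : V n) s) * (if y = (t : V n) + s' then 1 else 0)
        = sign (pairing (s' + y) s) := by
      simp_rw [hite]
      simp [mul_ite]
    rw [hsum]
    have hsign : sign (pairing s s') * sign (pairing (s' + y) s) = sign (pairing y s) := by
      rw [pairing_add_left, sign_add, ← mul_assoc, ← sign_add,
        pairing_comm s' s, hpair_self, sign_zero', one_mul]
    have hreal : (Real.sqrt a)⁻¹ * (Real.sqrt ((2:ℝ)^n))⁻¹ * a = (Real.sqrt b)⁻¹ :=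
      sqrt_calc ha hb hab
    have hC : (((Real.sqrt a : ℝ)) : ℂ)⁻¹ * (((Real.sqrt ((2:ℝ)^n) : ℝ)) : ℂ)⁻¹
        * ((Nat.card A : ℕ) : ℂ) = (((Real.sqrt b : ℝ)) : ℂ)⁻¹ := by
      have := congrArg (Complex.ofReal) hreal
      push_cast at this ⊢
      rw [ha_def] at this
      push_cast at this
      linear_combination this
    calc (((Real.sqrt a : ℝ)) : ℂ)⁻¹ * (((Real.sqrt ((2:ℝ)^n) : ℝ)) : ℂ)⁻¹
          * sign (pairing y s) * ((Nat.card A : ℕ) : ℂ)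
        = ((((Real.sqrt a : ℝ)) : ℂ)⁻¹ * (((Real.sqrt ((2:ℝ)^n) : ℝ)) : ℂ)⁻¹
            * ((Nat.card A : ℕ) : ℂ)) * sign (pairing y s) := by ring
      _ = (((Real.sqrt b : ℝ)) : ℂ)⁻¹ * sign (pairing y s) := by rw [hC]
      _ = _ := by rw [← hsign]; ring
  · rw [if_neg h]
    have hzero : ∀ t : perp A, (if y = (t : V n) + s' then (1:ℂ) else 0) = 0 := by
      intro t
      rw [if_neg]
      intro hy
      apply h
      have : s' + y = (t : V n) := by
        rw [hy, show s' + ((t:V n) + s') = (t:V n) + (s' + s') by ring, hadd_self, add_zero]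
      rw [this]
      exact t.2
    simp [hzero]
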